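/- Let d ≥ 2 and let e₁, e₂, e₃ be integers with 2 ≤ e₁ ≤ e₂ ≤ e₃ ≤ d and e₁ + e₂ + e₃ = 2d + 1. Define permutations of {1,…,d}: g₁ the cycle (d, d−1, …, e₃, 1, 2, …, d−e₂) [a single cycle of length e₁], g₂ the cycle (d−e₂+1, d−e₂+2, …, d) [a single cycle of length e₂], and g₃ the cycle (e₃, e₃−1, …, 2, 1) [a single cycle of length e₃]. Then g₁·g₂·g₃ = 1 in S_d, and the subgroup ⟨g₁, g₂, g₃⟩ acts transitively on {1,…,d}. -/

import Mathlib

private lemma formPermAux_apply (f : ℕ → ℕ) (n : ℕ)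
    (hf : ∀ i < n, ∀ j < n, f i = f j → i = j) {i : ℕ} (hi : i < n) :
    ((List.range n).map f).formPerm (f i) = f ((i + 1) % n) := by
  have hnd : ((List.range n).map f).Nodup :=
    List.Nodup.map_on
      (fun a ha b hb h => hf a (List.mem_range.1 ha) b (List.mem_range.1 hb) h)
      List.nodup_range
  have hlen : ((List.range n).map f).length = n := by simp
  have h := List.formPerm_apply_getElem _ hnd i (by simpa using hi)
  simpa using h

private lemma formPermAux_fix (f : ℕ → ℕ) (n x : ℕ) (hx : ∀ i < n, f i ≠ x) :
    ((List.range n).map f).formPerm x = x := by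
  apply List.formPerm_apply_of_notMem
  simp only [List.mem_map, List.mem_range, not_exists, not_and]
  exact fun i hi => hx i hi

/-- Let `d ≥ 2` and `2 ≤ e₁ ≤ e₂ ≤ e₃ ≤ d` with `e₁ + e₂ + e₃ = 2d + 1`.
The permutations of `{1,…,d}` (inside `Equiv.Perm ℕ`) given in cycle notation by
`g₁ = (d, d−1, …, e₃, 1, 2, …, d−e₂)`, `g₂ = (d−e₂+1, …, d)` and `g₃ = (e₃, e₃−1, …, 1)`
satisfy `g₁·g₂·g₃ = 1` (product = composition, permutations acting on the right, i.e.
applying `g₁`, then `g₂`, then `g₃`, is the identity), and `⟨g₁, g₂, g₃⟩` acts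
transitively on `{1,…,d}`. -/
theorem stmt6 (d e₁ e₂ e₃ : ℕ) (hd : 2 ≤ d)
    (h1 : 2 ≤ e₁) (h12 : e₁ ≤ e₂) (h23 : e₂ ≤ e₃) (h3d : e₃ ≤ d)
    (hsum : e₁ + e₂ + e₃ = 2 * d + 1)
    (g₁ g₂ g₃ : Equiv.Perm ℕ)
    (hg₁ : g₁ = (((List.range (d - e₃ + 1)).map (fun j => d - j)) ++
        (List.range (d - e₂)).map (· + 1)).formPerm)
    (hg₂ : g₂ = ((List.range e₂).map (fun j => d - e₂ + 1 + j)).formPerm)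
    (hg₃ : g₃ = ((List.range e₃).map (fun j => e₃ - j)).formPerm) :
    (∀ x, g₃ (g₂ (g₁ x)) = x) ∧
    (∀ x ∈ Finset.Icc 1 d, ∀ y ∈ Finset.Icc 1 d,
      ∃ g ∈ Subgroup.closure {g₁, g₂, g₃}, g x = y) := by
  set k := d - e₂ with hkdef
  set m := d - e₃ with hmdef
  have hk : e₂ + k = d := by omega
  have hm : e₃ + m = d := by omega
  have he₁ : e₁ = m + k + 1 := by omega
  have hke : k + 1 ≤ e₃ := by omega
  -- rewrite g₁'s list as a single map over a range
  have hlist : ((List.range (d - e₃ + 1)).map (fun j => d - j)) ++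
      (List.range (d - e₂)).map (· + 1) =
      (List.range (m + 1 + k)).map (fun i => if i ≤ m then d - i else i - m) := by
    apply List.ext_getElem
    · simp [hmdef, hkdef]
    · intro n h₁ h₂
      simp only [List.length_append, List.length_map, List.length_range] at h₁
      by_cases h : n < m + 1
      · rw [List.getElem_append_left (by simpa using h)]
        simp [hmdef, Nat.le_of_lt_succ h]
        intro; omega
      · rw [List.getElem_append_right (by simpa using h)]
        have : ¬ n ≤ m := by omega
        simp only [List.getElem_map, List.getElem_range, List.length_map, List.length_range]
        simp [hmdef, hkdef, this, show ¬ n ≤ d - e₃ by omega]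
        omega
  rw [hlist] at hg₁
  -- pointwise description of g₃
  have hg₃a : ∀ x, 2 ≤ x → x ≤ e₃ → g₃ x = x - 1 := by
    intro x hx2 hxe
    have hinj : ∀ i < e₃, ∀ j < e₃, e₃ - i = e₃ - j → i = j := by intro i hi j hj h; omega
    have hx : e₃ - (e₃ - x) = x := by omega
    have := formPermAux_apply (fun j => e₃ - j) e₃ hinj (i := e₃ - x) (by omega)
    rw [hg₃]
    rw [hx] at this
    rw [this, Nat.mod_eq_of_lt (by omega)]
    omega
  have hg₃1 : g₃ 1 = e₃ := by
    have hinj : ∀ i < e₃, ∀ j < e₃, e₃ - i = e₃ - j → i = j := by intro i hi j hj h; omega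
    have := formPermAux_apply (fun j => e₃ - j) e₃ hinj (i := e₃ - 1) (by omega)
    rw [hg₃]
    have h1' : e₃ - (e₃ - 1) = 1 := by omega
    rw [h1'] at this
    rw [this]
    have : (e₃ - 1 + 1) % e₃ = 0 := by
      have : e₃ - 1 + 1 = e₃ := by omega
      simp [this]
    simp [this]
  have hg₃fix : ∀ x, x = 0 ∨ e₃ < x → g₃ x = x := by
    intro x hx
    rw [hg₃]
    exact formPermAux_fix _ _ _ (by intro i hi; omega)
  -- pointwise description of g₂
  have hg₂a : ∀ x, k < x → x < d → g₂ x = x + 1 := by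
    intro x hx hxd
    have hinj : ∀ i < e₂, ∀ j < e₂, k + 1 + i = k + 1 + j → i = j := by
      intro i hi j hj h; omega
    have := formPermAux_apply (fun j => k + 1 + j) e₂ hinj (i := x - k - 1) (by omega)
    rw [show k + 1 + (x - k - 1) = x by omega, Nat.mod_eq_of_lt (by omega)] at this
    rw [hg₂, this]
    omega
  have hg₂d : g₂ d = k + 1 := by
    have hinj : ∀ i < e₂, ∀ j < e₂, k + 1 + i = k + 1 + j → i = j := by
      intro i hi j hj h; omega
    have := formPermAux_apply (fun j => k + 1 + j) e₂ hinj (i := e₂ - 1) (by omega)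
    rw [show k + 1 + (e₂ - 1) = d by omega,
      show (e₂ - 1 + 1) % e₂ = 0 by rw [show e₂ - 1 + 1 = e₂ by omega]; simp] at this
    rw [hg₂, this]
  have hg₂fix : ∀ x, x ≤ k ∨ d < x → g₂ x = x := by
    intro x hx
    rw [hg₂]
    exact formPermAux_fix _ _ _ (by intro i hi; show k + 1 + i ≠ x; omega)
  -- pointwise description of g₁
  set f₁ : ℕ → ℕ := fun i => if i ≤ m then d - i else i - m with hf₁
  have hinj₁ : ∀ i < m + 1 + k, ∀ j < m + 1 + k, f₁ i = f₁ j → i = j := by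
    intro i hi j hj h
    simp only [hf₁] at h
    split_ifs at h <;> omega
  have key₁ : ∀ i, i < m + 1 + k → g₁ (f₁ i) = f₁ ((i + 1) % (m + 1 + k)) := by
    intro i hi
    rw [hg₁]
    exact formPermAux_apply f₁ _ hinj₁ hi
  have hg₁a : ∀ x, e₃ < x → x ≤ d → g₁ x = x - 1 := by
    intro x hx hxd
    have h1 : f₁ (d - x) = x := by simp only [hf₁]; rw [if_pos (by omega)]; omega
    have := key₁ (d - x) (by omega)
    rw [h1, Nat.mod_eq_of_lt (by omega)] at this
    rw [this]
    simp only [hf₁]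
    rw [if_pos (by omega)]
    omega
  have hg₁e₃ : g₁ e₃ = f₁ ((m + 1) % (m + 1 + k)) := by
    have h1 : f₁ m = e₃ := by simp only [hf₁]; rw [if_pos le_rfl]; omega
    have := key₁ m (by omega)
    rwa [h1] at this
  have hg₁b : ∀ x, 1 ≤ x → x < k → g₁ x = x + 1 := by
    intro x hx hxk
    have h1 : f₁ (m + x) = x := by simp only [hf₁]; rw [if_neg (by omega)]; omega
    have := key₁ (m + x) (by omega)
    rw [h1, Nat.mod_eq_of_lt (by omega)] at this
    rw [this]
    simp only [hf₁]
    rw [if_neg (by omega)]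
    omega
  have hg₁k : 1 ≤ k → g₁ k = d := by
    intro hk1
    have h1 : f₁ (m + k) = k := by simp only [hf₁]; rw [if_neg (by omega)]; omega
    have := key₁ (m + k) (by omega)
    rw [h1, show (m + k + 1) % (m + 1 + k) = 0 by rw [show m + k + 1 = m + 1 + k by omega]; simp]
      at this
    rw [this]
    simp only [hf₁]
    rw [if_pos (by omega)]
    omega
  have hg₁fix : ∀ x, (x = 0 ∨ (k < x ∧ x < e₃) ∨ d < x) → g₁ x = x := by
    intro x hx
    rw [hg₁]
    apply formPermAux_fix
    intro i hi
    simp only [hf₁]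
    split_ifs <;> omega
  constructor
  · -- product identity
    intro x
    rcases Nat.eq_zero_or_pos x with rfl | hx0
    · rw [hg₁fix 0 (Or.inl rfl), hg₂fix 0 (Or.inl (by omega)), hg₃fix 0 (Or.inl rfl)]
    rcases le_or_gt x d with hxd | hxd
    · rcases lt_trichotomy x e₃ with hxe | rfl | hxe
      · rcases lt_trichotomy x k with hxk | rfl | hxk
        · -- 1 ≤ x < k
          rw [hg₁b x hx0 hxk, hg₂fix (x + 1) (Or.inl (by omega)),
            hg₃a (x + 1) (by omega) (by omega)]
          omega
        · -- x = k
          rw [hg₁k hx0, hg₂d, hg₃a (k + 1) (by omega) (by omega)]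
          omega
        · -- k < x < e₃
          rw [hg₁fix x (Or.inr (Or.inl ⟨hxk, hxe⟩)), hg₂a x hxk (by omega),
            hg₃a (x + 1) (by omega) (by omega)]
          omega
      · -- x = e₃
        rcases Nat.eq_zero_or_pos k with hk0 | hk1
        · rw [hg₁e₃, show (m + 1) % (m + 1 + k) = 0 by rw [hk0]; simp,
            show f₁ 0 = d by simp [hf₁]]
          rw [hg₂d, hk0, hg₃1]
        · rw [hg₁e₃, Nat.mod_eq_of_lt (by omega),
            show f₁ (m + 1) = 1 by simp only [hf₁]; rw [if_neg (by omega)]; omega,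
            hg₂fix 1 (Or.inl hk1), hg₃1]
      · -- e₃ < x ≤ d
        rw [hg₁a x hxe hxd, hg₂a (x - 1) (by omega) (by omega),
          show x - 1 + 1 = x by omega, hg₃fix x (Or.inr hxe)]
    · -- d < x
      rw [hg₁fix x (Or.inr (Or.inr hxd)), hg₂fix x (Or.inr hxd), hg₃fix x (Or.inr (by omega))]
  · -- transitivity
    have hg₃mem : g₃ ∈ Subgroup.closure {g₁, g₂, g₃} :=
      Subgroup.subset_closure (by simp)
    have hg₂mem : g₂ ∈ Subgroup.closure {g₁, g₂, g₃} :=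
      Subgroup.subset_closure (by simp)
    -- powers of g₃ decrement
    have pow₃ : ∀ n x, x ≤ e₃ → n < x → (g₃ ^ n) x = x - n := by
      intro n
      induction n with
      | zero => intro x _ _; simp
      | succ n ih =>
        intro x hxe hnx
        rw [pow_succ, Equiv.Perm.mul_apply, hg₃a x (by omega) hxe, ih (x - 1) (by omega) (by omega)]
        omega
    -- powers of g₂ increment
    have pow₂ : ∀ n x, k < x → x + n ≤ d → (g₂ ^ n) x = x + n := by
      intro n
      induction n with
      | zero => intro x _ _; simp
      | succ n ih =>
        intro x hkx hxd
        rw [pow_succ, Equiv.Perm.mul_apply, hg₂a x hkx (by omega),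
          ih (x + 1) (by omega) (by omega)]
        omega
    -- everything in [1,d] can be sent to 1
    have to1 : ∀ x, 1 ≤ x → x ≤ d → ∃ g ∈ Subgroup.closure {g₁, g₂, g₃}, g x = 1 := by
      intro x hx1 hxd
      rcases le_or_gt x e₃ with hxe | hxe
      · exact ⟨g₃ ^ (x - 1), pow_mem hg₃mem _, by
          rw [pow₃ (x - 1) x hxe (by omega)]; omega⟩
      · refine ⟨g₃ ^ k * g₂ ^ (d + 1 - x), mul_mem (pow_mem hg₃mem _) (pow_mem hg₂mem _), ?_⟩
        rw [Equiv.Perm.mul_apply, show d + 1 - x = (d - x) + 1 by omega, pow_succ',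
          Equiv.Perm.mul_apply, pow₂ (d - x) x (by omega) (by omega),
          show x + (d - x) = d by omega, hg₂d, pow₃ k (k + 1) hke (by omega)]
        omega
    intro x hx y hy
    simp only [Finset.mem_Icc] at hx hy
    obtain ⟨gx, hgxmem, hgx⟩ := to1 x hx.1 hx.2
    obtain ⟨gy, hgymem, hgy⟩ := to1 y hy.1 hy.2
    refine ⟨gy⁻¹ * gx, mul_mem (inv_mem hgymem) hgxmem, ?_⟩
    rw [Equiv.Perm.mul_apply, hgx, ← hgy, ← Equiv.Perm.mul_apply, inv_mul_cancel, Equiv.Perm.one_apply]
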